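/- Suppose L₀ is a sequential contraction of L. Then the maximal dimension of an abelian subalgebra does not decrease: for every Lie subalgebra K of L which is abelian (IsLieAbelian K), there exists a Lie subalgebra K₀ of L₀ which is abelian and satisfies finrank ℝ K₀ ≥ finrank ℝ K. -/

import Mathlib

open Filter Module

/-- `L₀` is a sequential contraction of the real Lie algebra `L`: there is a sequence of
real-linear equivalences `T p : L ≃ₗ[ℝ] L₀` such that the transported brackets converge to the
bracket of `L₀`. -/
def IsSequentialContraction (L L₀ : Type*) [LieRing L] [LieAlgebra ℝ L]
    [LieRing L₀] [LieAlgebra ℝ L₀] [TopologicalSpace L₀] : Prop :=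
  ∃ T : ℕ → (L ≃ₗ[ℝ] L₀), ∀ x y : L₀,
    Tendsto (fun p => T p ⁅(T p).symm x, (T p).symm y⁆) atTop (nhds ⁅x, y⁆)

/-- Pointwise convergent sequences of bilinear maps on a finite-dimensional space converge
"uniformly on converging sequences". -/
lemma tendsto_bilin_aux {L₀ : Type*} [AddCommGroup L₀] [Module ℝ L₀]
    [Module.Finite ℝ L₀] [TopologicalSpace L₀] [IsTopologicalAddGroup L₀] [ContinuousSMul ℝ L₀]
    [T2Space L₀]
    (B : ℕ → L₀ →ₗ[ℝ] L₀ →ₗ[ℝ] L₀) (C : L₀ →ₗ[ℝ] L₀ →ₗ[ℝ] L₀)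
    (hB : ∀ x y, Tendsto (fun p => B p x y) atTop (nhds (C x y)))
    {x y : L₀} {xs ys : ℕ → L₀} (hx : Tendsto xs atTop (nhds x))
    (hy : Tendsto ys atTop (nhds y)) :
    Tendsto (fun p => B p (xs p) (ys p)) atTop (nhds (C x y)) := by
  haveI : FiniteDimensional ℝ L₀ := ‹Module.Finite ℝ L₀›
  set b := Module.finBasis ℝ L₀ with hb
  have expand : ∀ (D : L₀ →ₗ[ℝ] L₀ →ₗ[ℝ] L₀) (u v : L₀),
      D u v = ∑ i, ∑ j, (b.repr u i) • (b.repr v j) • D (b i) (b j) := by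
    intro D u v
    conv_lhs => rw [← b.sum_repr u, ← b.sum_repr v]
    simp only [map_sum, LinearMap.sum_apply, map_smul, LinearMap.smul_apply, Finset.smul_sum]
    rw [Finset.sum_comm]
    exact Finset.sum_congr rfl fun i _ => Finset.sum_congr rfl fun j _ => smul_comm _ _ _
  have key : Tendsto (fun p => ∑ i, ∑ j,
      (b.repr (xs p) i) • (b.repr (ys p) j) • B p (b i) (b j)) atTop
      (nhds (∑ i, ∑ j, (b.repr x i) • (b.repr y j) • C (b i) (b j))) := by
    refine tendsto_finset_sum _ fun i _ => tendsto_finset_sum _ fun j _ => ?_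
    have hcx : Tendsto (fun p => b.repr (xs p) i) atTop (nhds (b.repr x i)) :=
      ((b.coord i).continuous_of_finiteDimensional.tendsto x).comp hx
    have hcy : Tendsto (fun p => b.repr (ys p) j) atTop (nhds (b.repr y j)) :=
      ((b.coord j).continuous_of_finiteDimensional.tendsto y).comp hy
    exact hcx.smul (hcy.smul (hB (b i) (b j)))
  simpa only [← expand] using key

theorem abelian_subalgebra_finrank_le_of_contraction {L L₀ : Type*} [LieRing L] [LieAlgebra ℝ L] [LieRing L₀] [LieAlgebra ℝ L₀]
    [Module.Finite ℝ L] [Module.Finite ℝ L₀]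
    [TopologicalSpace L₀] [IsTopologicalAddGroup L₀] [ContinuousSMul ℝ L₀] [T2Space L₀]
    (h : IsSequentialContraction L L₀) :
    ∀ K : LieSubalgebra ℝ L, IsLieAbelian K →
      ∃ K₀ : LieSubalgebra ℝ L₀, IsLieAbelian K₀ ∧ finrank ℝ K₀ ≥ finrank ℝ K := by
  intro K hK
  haveI : FiniteDimensional ℝ L₀ := ‹Module.Finite ℝ L₀›
  obtain ⟨T, hT⟩ := h
  -- the transported bilinear bracket maps
  let B : ℕ → L₀ →ₗ[ℝ] L₀ →ₗ[ℝ] L₀ := fun p => LinearMap.mk₂ ℝ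
    (fun x y => T p ⁅(T p).symm x, (T p).symm y⁆)
    (by intro m₁ m₂ n₂; simp [add_lie])
    (by intro c m n; simp [smul_lie])
    (by intro m n₁ n₂; simp [lie_add])
    (by intro c m n; simp [lie_smul])
  let C : L₀ →ₗ[ℝ] L₀ →ₗ[ℝ] L₀ := LinearMap.mk₂ ℝ (fun x y => ⁅x, y⁆)
    (fun m₁ m₂ n => add_lie m₁ m₂ n) (fun c m n => smul_lie c m n)
    (fun m n₁ n₂ => lie_add m n₁ n₂) (fun c m n => lie_smul c m n)
  have hBC : ∀ x y, Tendsto (fun p => B p x y) atTop (nhds (C x y)) := hT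
  -- move to Euclidean space
  set n := finrank ℝ L₀ with hn
  let E := EuclideanSpace ℝ (Fin n)
  let e : L₀ ≃ₗ[ℝ] E := LinearEquiv.ofFinrankEq _ _ (by
    show finrank ℝ L₀ = finrank ℝ (EuclideanSpace ℝ (Fin n))
    rw [finrank_euclideanSpace_fin])
  let φ : L₀ ≃L[ℝ] E := e.toContinuousLinearEquiv
  set d := finrank ℝ K with hd
  -- the transported subspaces
  let W : ℕ → Submodule ℝ E := fun p => (K.toSubmodule.map ((T p) : L →ₗ[ℝ] L₀)).map (e : L₀ →ₗ[ℝ] E)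
  have hWd : ∀ p, finrank ℝ (W p) = d := by
    intro p
    show finrank ℝ (Submodule.map (e : L₀ →ₗ[ℝ] E) _) = d
    rw [LinearEquiv.finrank_map_eq, LinearEquiv.finrank_map_eq]
    rfl
  -- orthonormal bases of the transported subspaces
  let ob : ∀ p, OrthonormalBasis (Fin d) ℝ (W p) := fun p =>
    (stdOrthonormalBasis ℝ (W p)).reindex (finCongr (hWd p))
  let f : ℕ → Fin d → E := fun p i => (ob p i : E)
  have hmem : ∀ p i, f p i ∈ W p := fun p i => (ob p i).2
  have horth : ∀ p i j, (inner ℝ (f p i) (f p j) : ℝ) = if i = j then 1 else 0 := by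
    intro p i j
    have := orthonormal_iff_ite.mp (ob p).orthonormal i j
    rwa [Submodule.coe_inner] at this
  -- extract a convergent subsequence
  have hcpt : IsCompact (Set.univ.pi fun _ : Fin d => Metric.closedBall (0 : E) 1) :=
    isCompact_univ_pi fun _ => isCompact_closedBall 0 1
  obtain ⟨g, -, ψ, hψ, hconv⟩ := hcpt.tendsto_subseq (x := fun p => f p) (by
    intro p
    rw [Set.mem_univ_pi]
    intro i
    have : ‖f p i‖ = 1 := by
      have h0 : (inner ℝ (f p i) (f p i) : ℝ) = 1 := by simpa using horth p i i
      have hnn : ‖f p i‖ ^ 2 = 1 := by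
        rw [← real_inner_self_eq_norm_sq, h0]
      nlinarith [norm_nonneg (f p i)]
    simp [this])
  have hgi : ∀ i, Tendsto (fun k => f (ψ k) i) atTop (nhds (g i)) := fun i =>
    tendsto_pi_nhds.mp hconv i
  -- the limit family is orthonormal, hence linearly independent
  have hgo : Orthonormal ℝ g := by
    rw [orthonormal_iff_ite]
    intro i j
    have h1 : Tendsto (fun k => (inner ℝ (f (ψ k) i) (f (ψ k) j) : ℝ)) atTop
        (nhds (inner ℝ (g i) (g j))) := (hgi i).inner (hgi j)
    have h2 : (fun k => (inner ℝ (f (ψ k) i) (f (ψ k) j) : ℝ)) =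
        fun _ => if i = j then (1 : ℝ) else 0 := funext fun k => horth (ψ k) i j
    rw [h2] at h1
    exact tendsto_nhds_unique h1 tendsto_const_nhds
  let v : Fin d → L₀ := fun i => e.symm (g i)
  have hvli : LinearIndependent ℝ v := by
    have := hgo.linearIndependent.map' (e.symm : E →ₗ[ℝ] L₀) e.symm.ker
    exact this
  -- the brackets of the limit vectors vanish
  have hv0 : ∀ i j, ⁅v i, v j⁆ = (0 : L₀) := by
    intro i j
    have hes : Continuous (e.symm : E → L₀) := φ.symm.continuous
    have hxi : Tendsto (fun k => e.symm (f (ψ k) i)) atTop (nhds (v i)) :=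
      (hes.tendsto (g i)).comp (hgi i)
    have hxj : Tendsto (fun k => e.symm (f (ψ k) j)) atTop (nhds (v j)) :=
      (hes.tendsto (g j)).comp (hgi j)
    have hB' : ∀ x y, Tendsto (fun k => B (ψ k) x y) atTop (nhds (C x y)) := fun x y =>
      (hBC x y).comp hψ.tendsto_atTop
    have hlim := tendsto_bilin_aux (fun k => B (ψ k)) C hB' hxi hxj
    have hz : ∀ k, B (ψ k) (e.symm (f (ψ k) i)) (e.symm (f (ψ k) j)) = 0 := by
      intro k
      obtain ⟨a, ha, hae⟩ := hmem (ψ k) i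
      obtain ⟨a', ha', rfl⟩ := ha
      obtain ⟨c, hc, hce⟩ := hmem (ψ k) j
      obtain ⟨c', hc', rfl⟩ := hc
      have h1 : e.symm (f (ψ k) i) = T (ψ k) a' := by rw [← hae]; simp
      have h2 : e.symm (f (ψ k) j) = T (ψ k) c' := by rw [← hce]; simp
      rw [h1, h2]
      show T (ψ k) ⁅(T (ψ k)).symm (T (ψ k) a'), (T (ψ k)).symm (T (ψ k) c')⁆ = 0
      rw [LinearEquiv.symm_apply_apply, LinearEquiv.symm_apply_apply]
      have habel : ⁅a', c'⁆ = (0 : L) := by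
        have := trivial_lie_zero K K (⟨a', ha'⟩ : K) (⟨c', hc'⟩ : K)
        have hcoe := congrArg (Subtype.val) this
        rwa [LieSubalgebra.coe_bracket] at hcoe
      rw [habel, map_zero]
    rw [funext hz] at hlim
    have : C (v i) (v j) = 0 := tendsto_nhds_unique hlim tendsto_const_nhds
    exact this.symm ▸ rfl
  -- form the abelian subalgebra
  let Wv : Submodule ℝ L₀ := Submodule.span ℝ (Set.range v)
  have hbr : ∀ x ∈ Wv, ∀ y ∈ Wv, ⁅x, y⁆ = (0 : L₀) := by
    intro x hx
    induction hx using Submodule.span_induction with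
    | mem x hxr =>
      obtain ⟨i, rfl⟩ := hxr
      intro y hy
      induction hy using Submodule.span_induction with
      | mem y hyr => obtain ⟨j, rfl⟩ := hyr; exact hv0 i j
      | zero => simp
      | add y z _ _ h1 h2 => rw [lie_add, h1, h2, add_zero]
      | smul a y _ h1 => rw [lie_smul, h1, smul_zero]
    | zero => intro y _; simp
    | add x z _ _ h1 h2 => intro y hy; rw [add_lie, h1 y hy, h2 y hy, add_zero]
    | smul a x _ h1 => intro y hy; rw [smul_lie, h1 y hy, smul_zero]
  let K₀ : LieSubalgebra ℝ L₀ :=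
    { Wv with
      lie_mem' := fun {x y} hx hy => by
        have : ⁅x, y⁆ = (0 : L₀) := hbr x hx y hy
        rw [this]; exact Wv.zero_mem }
  refine ⟨K₀, ?_, ?_⟩
  · constructor
    intro a b
    apply Subtype.ext
    rw [LieSubalgebra.coe_bracket]
    exact hbr a a.2 b b.2
  · have : finrank ℝ K₀ = d := by
      show finrank ℝ Wv = d
      rw [finrank_span_eq_card hvli, Fintype.card_fin]
    rw [this]
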